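/- arXiv:2301.10869 — 2 statements merged into one kernel-verified Lean document; each statement's English description precedes it below -/
import Mathlib

section
/- Let T ≥ 1 and Ω > 0, and let N be the T×T matrix with N_{ij} = Ω for i < j and 0 otherwise. Let e_T be the T-th standard basis vector. Then for every k < T, the ℓ¹-norm of N^k e_T satisfies ‖N^k e_T‖₁ ≤ Ω^k T^k / k!. -/
open Matrix

lemma binom_step (k n : ℕ) : n^(k+1) + (k+1)*n^k ≤ (n+1)^(k+1) := by
  induction k with
  | zero => simp
  | succ k ih =>
      calc n^(k+2) + (k+2)*n^(k+1)
          ≤ (n+1) * (n^(k+1) + (k+1)*n^k) := by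
            have he : (n+1) * (n^(k+1) + (k+1)*n^k)
                = n^(k+2) + (k+2)*n^(k+1) + (k+1)*n^k := by ring
            rw [he]; exact Nat.le_add_right _ _
        _ ≤ (n+1) * (n+1)^(k+1) := Nat.mul_le_mul_left _ ih
        _ = (n+1)^(k+2) := by ring

lemma pow_sum_nat (k n : ℕ) : (k+1) * ∑ m ∈ Finset.range n, m^k ≤ n^(k+1) := by
  induction n with
  | zero => simp
  | succ n ih =>
      rw [Finset.sum_range_succ, Nat.mul_add]
      calc (k+1) * ∑ m ∈ Finset.range n, m^k + (k+1) * n^k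
          ≤ n^(k+1) + (k+1)*n^k := Nat.add_le_add_right ih _
        _ ≤ (n+1)^(k+1) := binom_step k n

lemma pow_sum_real (k n : ℕ) : ∑ m ∈ Finset.range n, (m:ℝ)^k ≤ (n:ℝ)^(k+1)/(k+1) := by
  have h : ((k:ℝ)+1) * ∑ m ∈ Finset.range n, (m:ℝ)^k ≤ (n:ℝ)^(k+1) := by
    exact_mod_cast pow_sum_nat k n
  rw [le_div_iff₀ (by positivity)]
  linarith [h]

lemma sum_reindex (T : ℕ) (g : ℕ → ℝ) (i : ℕ) :
    ∑ j : Fin T, (if i < (j:ℕ) then g (T-1-(j:ℕ)) else 0)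
      = ∑ m ∈ Finset.range (T-1-i), g m := by
  rw [Fin.sum_univ_eq_sum_range (fun j => if i < j then g (T-1-j) else 0) T]
  rw [← Finset.sum_filter]
  have hfil : (Finset.range T).filter (fun j => i < j) = Finset.Ico (i+1) T := by
    ext a; simp [Finset.mem_filter, Finset.mem_Ico]; omega
  rw [hfil, Finset.sum_Ico_eq_sum_range]
  have hd : T - (i+1) = T-1-i := by omega
  rw [hd]
  have hcong : ∀ m ∈ Finset.range (T-1-i), g (T-1-(i+1+m)) = g ((T-1-i) - 1 - m) := by
    intro m _; congr 1; omega
  rw [Finset.sum_congr rfl hcong, Finset.sum_range_reflect]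

theorem stmt_6 (T : ℕ) (hT : 1 ≤ T) (Ω : ℝ) (hΩ : 0 < Ω)
    (N : Matrix (Fin T) (Fin T) ℝ)
    (hN : ∀ i j : Fin T, N i j = if (i : ℕ) < (j : ℕ) then Ω else 0)
    (eT : Fin T → ℝ) (heT : eT = Pi.single ⟨T - 1, by omega⟩ 1) :
    ∀ k : ℕ, k < T →
      ∑ i : Fin T, |((N ^ k).mulVec eT) i| ≤ Ω ^ k * (T : ℝ) ^ k / (Nat.factorial k) := by
  have step : ∀ (k : ℕ) (i : Fin T), ((N ^ (k+1)).mulVec eT) i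
      = ∑ j : Fin T, (if (i:ℕ) < (j:ℕ) then Ω else 0) * ((N ^ k).mulVec eT) j := by
    intro k i
    rw [pow_succ', ← Matrix.mulVec_mulVec]
    simp [Matrix.mulVec, dotProduct, hN]
  have nonneg : ∀ (k : ℕ) (i : Fin T), 0 ≤ ((N ^ k).mulVec eT) i := by
    intro k
    induction k with
    | zero =>
        intro i
        simp only [pow_zero, Matrix.one_mulVec, heT, Pi.single_apply]
        split <;> norm_num
    | succ k ih =>
        intro i
        rw [step]
        apply Finset.sum_nonneg
        intro j _
        split
        · exact mul_nonneg hΩ.le (ih j)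
        · simp
  have ub : ∀ (m : ℕ) (i : Fin T), ((N ^ (m+1)).mulVec eT) i
      ≤ Ω^(m+1) * ((T-1-(i:ℕ) : ℕ) : ℝ)^m / (Nat.factorial m) := by
    intro m
    induction m with
    | zero =>
        intro i
        rw [step]
        simp only [pow_zero, Matrix.one_mulVec]
        have h1 : ∑ j : Fin T, (if (i:ℕ) < (j:ℕ) then Ω else 0) * eT j
            ≤ ∑ j : Fin T, Ω * eT j := by
          apply Finset.sum_le_sum
          intro j _
          have hej : 0 ≤ eT j := by
            rw [heT, Pi.single_apply]; split <;> norm_num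
          split
          · exact le_rfl
          · rw [zero_mul]; exact mul_nonneg hΩ.le hej
        have h2 : ∑ j : Fin T, Ω * eT j = Ω := by
          rw [← Finset.mul_sum, heT]
          simp [Pi.single_apply]
        calc ∑ j : Fin T, (if (i:ℕ) < (j:ℕ) then Ω else 0) * eT j ≤ Ω := h1.trans h2.le
          _ ≤ Ω^(0+1) * ((T-1-(i:ℕ) : ℕ) : ℝ)^0 / (Nat.factorial 0) := by simp
    | succ m ih =>
        intro i
        rw [step]
        set d : ℕ := T - 1 - (i:ℕ) with hdd
        calc ∑ j : Fin T, (if (i:ℕ) < (j:ℕ) then Ω else 0) * ((N ^ (m+1)).mulVec eT) j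
            ≤ ∑ j : Fin T, (if (i:ℕ) < (j:ℕ) then
                Ω^(m+2) * ((T-1-(j:ℕ) : ℕ) : ℝ)^m / (Nat.factorial m) else 0) := by
              apply Finset.sum_le_sum
              intro j _
              split
              · calc Ω * ((N ^ (m+1)).mulVec eT) j
                    ≤ Ω * (Ω^(m+1) * ((T-1-(j:ℕ) : ℕ) : ℝ)^m / (Nat.factorial m)) := by
                      exact mul_le_mul_of_nonneg_left (ih j) hΩ.le
                  _ = Ω^(m+2) * ((T-1-(j:ℕ) : ℕ) : ℝ)^m / (Nat.factorial m) := by ring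
              · simp
          _ = ∑ l ∈ Finset.range d, Ω^(m+2) * (l : ℝ)^m / (Nat.factorial m) :=
              sum_reindex T (fun l => Ω^(m+2) * (l : ℝ)^m / (Nat.factorial m)) (i:ℕ)
          _ = Ω^(m+2) / (Nat.factorial m) * ∑ l ∈ Finset.range d, (l : ℝ)^m := by
              rw [Finset.mul_sum]
              exact Finset.sum_congr rfl (fun l _ => by ring)
          _ ≤ Ω^(m+2) / (Nat.factorial m) * ((d:ℝ)^(m+1)/(m+1)) := by
              have := pow_sum_real m d
              exact mul_le_mul_of_nonneg_left this (by positivity)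
          _ = Ω^(m+1+1) * ((d:ℕ) : ℝ)^(m+1) / (Nat.factorial (m+1)) := by
              rw [Nat.factorial_succ]
              push_cast
              rw [div_mul_div_comm]
              ring
  intro k hk
  cases k with
  | zero =>
      simp only [pow_zero, Matrix.one_mulVec, heT, Nat.factorial_zero]
      simp [Pi.single_apply, apply_ite abs]
  | succ m =>
      calc ∑ i : Fin T, |((N ^ (m+1)).mulVec eT) i|
          = ∑ i : Fin T, ((N ^ (m+1)).mulVec eT) i :=
            Finset.sum_congr rfl (fun i _ => abs_of_nonneg (nonneg _ i))
        _ ≤ ∑ i : Fin T, Ω^(m+1) * ((T-1-(i:ℕ) : ℕ) : ℝ)^m / (Nat.factorial m) :=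
            Finset.sum_le_sum (fun i _ => ub m i)
        _ = ∑ l ∈ Finset.range T, Ω^(m+1) * ((l:ℕ) : ℝ)^m / (Nat.factorial m) := by
            rw [Fin.sum_univ_eq_sum_range
              (fun j => Ω^(m+1) * ((T-1-j : ℕ) : ℝ)^m / (Nat.factorial m)) T]
            exact Finset.sum_range_reflect (fun l => Ω^(m+1) * ((l:ℕ) : ℝ)^m / (Nat.factorial m)) T
        _ = Ω^(m+1) / (Nat.factorial m) * ∑ l ∈ Finset.range T, (l : ℝ)^m := by
            rw [Finset.mul_sum]
            exact Finset.sum_congr rfl (fun l _ => by ring)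
        _ ≤ Ω^(m+1) / (Nat.factorial m) * ((T:ℝ)^(m+1)/(m+1)) := by
            exact mul_le_mul_of_nonneg_left (pow_sum_real m T) (by positivity)
        _ ≤ Ω^(m+1) * (T:ℝ)^(m+1) / (Nat.factorial (m+1)) := by
            apply le_of_eq
            rw [Nat.factorial_succ]
            push_cast
            rw [div_mul_div_comm]
            ring
end

section
/- Let T ≥ 1 and let N be the T×T matrix with N_{ij} = Ω for i < j and 0 otherwise, Ω > 0. Then for every k < T the operator norm satisfies ‖N^k‖ ≤ √T · Ω^k T^k / k!. -/
open Matrix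

/-- Operator norm induced by the Euclidean norm. -/
noncomputable def opNorm {n : ℕ} (A : Matrix (Fin n) (Fin n) ℝ) : ℝ :=
  ‖(Matrix.toEuclideanCLM (𝕜 := ℝ) (n := Fin n)) A‖

/-- Euclidean norm of a vector. -/
noncomputable def eNorm {n : ℕ} (v : Fin n → ℝ) : ℝ :=
  ‖(WithLp.equiv 2 (Fin n → ℝ)).symm v‖

/-- Infimum of the quadratic form over Euclidean-unit vectors. -/
noncomputable def quadInf {n : ℕ} (A : Matrix (Fin n) (Fin n) ℝ) : ℝ :=
  sInf {x : ℝ | ∃ v : Fin n → ℝ, eNorm v = 1 ∧ x = v ⬝ᵥ A.mulVec v}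

/-- Operator norm is at most the Frobenius norm. -/
lemma opNorm_le_frob {n : ℕ} (A : Matrix (Fin n) (Fin n) ℝ) :
    opNorm A ≤ Real.sqrt (∑ i, ∑ j, (A i j) ^ 2) := by
  apply ContinuousLinearMap.opNorm_le_bound _ (Real.sqrt_nonneg _)
  intro x
  have hx : (Matrix.toEuclideanCLM (𝕜 := ℝ) (n := Fin n) A) x =
      (WithLp.equiv 2 (Fin n → ℝ)).symm (A.mulVec (fun j => x j)) := by
    rfl
  rw [hx]
  have h1 : ‖(WithLp.equiv 2 (Fin n → ℝ)).symm (A.mulVec (fun j => x j))‖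
      = Real.sqrt (∑ i, (A.mulVec (fun j => x j) i) ^ 2) := by
    rw [EuclideanSpace.norm_eq]
    congr 1
    exact Finset.sum_congr rfl fun i _ => by rw [Real.norm_eq_abs, sq_abs]; rfl
  have h2 : ‖x‖ = Real.sqrt (∑ j, (x j) ^ 2) := by
    rw [EuclideanSpace.norm_eq]
    congr 1
    exact Finset.sum_congr rfl fun i _ => by rw [Real.norm_eq_abs, sq_abs]
  rw [h1, h2, ← Real.sqrt_mul (by positivity)]
  apply Real.sqrt_le_sqrt
  calc ∑ i, (A.mulVec (fun j => x j) i) ^ 2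
      ≤ ∑ i, ((∑ j, (A i j) ^ 2) * ∑ j, (x j) ^ 2) := by
        apply Finset.sum_le_sum
        intro i _
        have h := Finset.sum_mul_sq_le_sq_mul_sq Finset.univ (fun j => A i j) (fun j => x j)
        simpa [Matrix.mulVec, dotProduct] using h
    _ = (∑ i, ∑ j, (A i j) ^ 2) * ∑ j, (x j) ^ 2 := by
        rw [← Finset.sum_mul]

/-- Hockey-stick style counting bound. -/
lemma natsum_bound (T a j k : ℕ) (_hj : j < T) :
    (∑ m ∈ Finset.range T, if a ≤ m ∧ m + (k + 1) ≤ j then (j - m - 1).choose k else 0)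
      ≤ (j - a).choose (k + 1) := by
  by_cases hE : a + k + 1 ≤ j
  · have hfilter : (Finset.range T).filter (fun m => a ≤ m ∧ m + (k + 1) ≤ j)
        = Finset.Ico a (j - k) := by
      ext m
      simp only [Finset.mem_filter, Finset.mem_range, Finset.mem_Ico]
      omega
    rw [← Finset.sum_filter, hfilter]
    have hinj : ∀ x ∈ Finset.Ico a (j - k), ∀ y ∈ Finset.Ico a (j - k),
        j - 1 - x = j - 1 - y → x = y := by
      intro x hx y hy h
      simp only [Finset.mem_Ico] at hx hy
      omega
    calc ∑ m ∈ Finset.Ico a (j - k), (j - m - 1).choose k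
        = ∑ m ∈ Finset.Ico a (j - k), (j - 1 - m).choose k := by
          refine Finset.sum_congr rfl fun m _ => ?_
          congr 1
          omega
      _ = ∑ t ∈ (Finset.Ico a (j - k)).image (fun m => j - 1 - m), t.choose k := by
          rw [Finset.sum_image hinj]
      _ ≤ ∑ t ∈ Finset.Icc k (j - 1 - a), t.choose k := by
          apply Finset.sum_le_sum_of_subset
          intro t ht
          simp only [Finset.mem_image, Finset.mem_Ico] at ht
          obtain ⟨m, hm, rfl⟩ := ht
          simp only [Finset.mem_Icc]
          omega
      _ = (j - 1 - a + 1).choose (k + 1) := Nat.sum_Icc_choose _ _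
      _ = (j - a).choose (k + 1) := by congr 1; omega
  · calc (∑ m ∈ Finset.range T, if a ≤ m ∧ m + (k + 1) ≤ j then (j - m - 1).choose k else 0)
        = 0 := by
          apply Finset.sum_eq_zero
          intro m _
          rw [if_neg]
          omega
      _ ≤ _ := Nat.zero_le _

theorem stmt_16 (T : ℕ) (hT : 1 ≤ T) (Ω : ℝ) (hΩ : 0 < Ω)
    (N : Matrix (Fin T) (Fin T) ℝ)
    (hN : ∀ i j : Fin T, N i j = if (i : ℕ) < (j : ℕ) then Ω else 0) :
    ∀ k : ℕ, k < T →
      opNorm (N ^ k) ≤ Real.sqrt T * Ω ^ k * (T : ℝ) ^ k / (Nat.factorial k) := by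
  -- key entrywise claim
  have key : ∀ k : ℕ, ∀ i j : Fin T,
      0 ≤ (N ^ (k + 1)) i j ∧ ((j : ℕ) < (i : ℕ) + (k + 1) → (N ^ (k + 1)) i j = 0) ∧
      (N ^ (k + 1)) i j ≤ Ω ^ (k + 1) * (((j : ℕ) - (i : ℕ) - 1).choose k : ℝ) := by
    intro k
    induction k with
    | zero =>
      intro i j
      rw [pow_one, hN i j]
      refine ⟨?_, ?_, ?_⟩
      · split_ifs
        · exact hΩ.le
        · exact le_refl 0
      · intro h
        rw [if_neg (by omega)]
      · split_ifs with h
        · simp [Nat.choose_zero_right]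
        · positivity
    | succ k ih =>
      intro i j
      have hmul : (N ^ (k + 2)) i j = ∑ m, N i m * (N ^ (k + 1)) m j := by
        rw [show k + 2 = (k + 1) + 1 by ring, pow_succ']
        exact Matrix.mul_apply
      have hNnn : ∀ a b : Fin T, 0 ≤ N a b := by
        intro a b
        rw [hN]
        split_ifs
        · exact hΩ.le
        · exact le_refl 0
      refine ⟨?_, ?_, ?_⟩
      · rw [hmul]
        exact Finset.sum_nonneg fun m _ => mul_nonneg (hNnn i m) (ih m j).1
      · intro hij
        rw [hmul]
        apply Finset.sum_eq_zero
        intro m _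
        by_cases h : (i : ℕ) < (m : ℕ)
        · rw [(ih m j).2.1 (by omega), mul_zero]
        · rw [hN, if_neg h, zero_mul]
      · rw [hmul]
        have hterm : ∀ m : Fin T, N i m * (N ^ (k + 1)) m j ≤
            Ω ^ (k + 2) * (if (i : ℕ) + 1 ≤ (m : ℕ) ∧ (m : ℕ) + (k + 1) ≤ (j : ℕ) then
              (((j : ℕ) - (m : ℕ) - 1).choose k : ℝ) else 0) := by
          intro m
          by_cases h1 : (i : ℕ) < (m : ℕ)
          · by_cases h2 : (m : ℕ) + (k + 1) ≤ (j : ℕ)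
            · rw [hN, if_pos h1, if_pos ⟨h1, h2⟩]
              calc Ω * (N ^ (k + 1)) m j
                  ≤ Ω * (Ω ^ (k + 1) * (((j : ℕ) - (m : ℕ) - 1).choose k : ℝ)) :=
                    mul_le_mul_of_nonneg_left (ih m j).2.2 hΩ.le
                _ = Ω ^ (k + 2) * (((j : ℕ) - (m : ℕ) - 1).choose k : ℝ) := by ring
            · rw [(ih m j).2.1 (by omega), mul_zero, if_neg (by tauto), mul_zero]
          · rw [hN, if_neg h1, zero_mul, if_neg (by omega), mul_zero]
        calc ∑ m, N i m * (N ^ (k + 1)) m j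
            ≤ ∑ m : Fin T, Ω ^ (k + 2) * (if (i : ℕ) + 1 ≤ (m : ℕ) ∧ (m : ℕ) + (k + 1) ≤ (j : ℕ)
              then (((j : ℕ) - (m : ℕ) - 1).choose k : ℝ) else 0) :=
              Finset.sum_le_sum fun m _ => hterm m
          _ = Ω ^ (k + 2) * ∑ m : Fin T, (if (i : ℕ) + 1 ≤ (m : ℕ) ∧ (m : ℕ) + (k + 1) ≤ (j : ℕ)
              then (((j : ℕ) - (m : ℕ) - 1).choose k : ℝ) else 0) := by
              rw [← Finset.mul_sum]
          _ ≤ Ω ^ (k + 2) * (((j : ℕ) - (i : ℕ) - 1).choose (k + 1) : ℝ) := by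
              apply mul_le_mul_of_nonneg_left _ (by positivity)
              have hnat := natsum_bound T ((i : ℕ) + 1) (j : ℕ) k j.isLt
              have hsum : ∑ m : Fin T, (if (i : ℕ) + 1 ≤ (m : ℕ) ∧ (m : ℕ) + (k + 1) ≤ (j : ℕ)
                  then (((j : ℕ) - (m : ℕ) - 1).choose k : ℝ) else 0)
                  = ∑ m ∈ Finset.range T, (if (i : ℕ) + 1 ≤ m ∧ m + (k + 1) ≤ (j : ℕ)
                  then (((j : ℕ) - m - 1).choose k : ℝ) else 0) :=
                Fin.sum_univ_eq_sum_range (fun m => if (i : ℕ) + 1 ≤ m ∧ m + (k + 1) ≤ (j : ℕ)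
                  then (((j : ℕ) - m - 1).choose k : ℝ) else 0) T
              rw [hsum]
              have : ((j : ℕ) - ((i : ℕ) + 1)).choose (k + 1)
                  = ((j : ℕ) - (i : ℕ) - 1).choose (k + 1) := rfl
              rw [this] at hnat
              calc ∑ m ∈ Finset.range T, (if (i : ℕ) + 1 ≤ m ∧ m + (k + 1) ≤ (j : ℕ)
                  then (((j : ℕ) - m - 1).choose k : ℝ) else 0)
                  = ((∑ m ∈ Finset.range T, if (i : ℕ) + 1 ≤ m ∧ m + (k + 1) ≤ (j : ℕ)
                    then ((j : ℕ) - m - 1).choose k else 0 : ℕ) : ℝ) := by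
                    push_cast [apply_ite (Nat.cast : ℕ → ℝ)]
                    rfl
                _ ≤ _ := by exact_mod_cast hnat
  intro k hk
  match k, hk with
  | 0, hk =>
    have hne : Nonempty (Fin T) := ⟨⟨0, hT⟩⟩
    have hnt : Nontrivial (EuclideanSpace ℝ (Fin T)) :=
      (WithLp.equiv 2 (Fin T → ℝ)).nontrivial
    have h1 : opNorm (N ^ 0) = 1 := by
      rw [pow_zero]
      unfold opNorm
      rw [_root_.map_one]
      exact norm_one
    rw [h1]
    simp only [pow_zero, Nat.factorial_zero, Nat.cast_one, mul_one, div_one]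
    calc (1 : ℝ) = Real.sqrt 1 := Real.sqrt_one.symm
      _ ≤ Real.sqrt T := Real.sqrt_le_sqrt (by exact_mod_cast hT)
  | (k + 1), hk =>
    set B : ℝ := Ω ^ (k + 1) * ((T : ℝ) ^ (k + 1) / (Nat.factorial (k + 1))) with hB
    have hBnn : 0 ≤ B := by positivity
    -- column sum bound
    have colsum : ∀ j : Fin T, ∑ i, (N ^ (k + 1)) i j ≤ B := by
      intro j
      have hterm : ∀ i : Fin T, (N ^ (k + 1)) i j ≤
          Ω ^ (k + 1) * (if 0 ≤ (i : ℕ) ∧ (i : ℕ) + (k + 1) ≤ (j : ℕ) then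
            (((j : ℕ) - (i : ℕ) - 1).choose k : ℝ) else 0) := by
        intro i
        by_cases h2 : (i : ℕ) + (k + 1) ≤ (j : ℕ)
        · rw [if_pos ⟨Nat.zero_le _, h2⟩]
          exact (key k i j).2.2
        · rw [(key k i j).2.1 (by omega), if_neg (by tauto), mul_zero]
      calc ∑ i, (N ^ (k + 1)) i j
          ≤ ∑ i : Fin T, Ω ^ (k + 1) * (if 0 ≤ (i : ℕ) ∧ (i : ℕ) + (k + 1) ≤ (j : ℕ) then
            (((j : ℕ) - (i : ℕ) - 1).choose k : ℝ) else 0) :=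
            Finset.sum_le_sum fun i _ => hterm i
        _ = Ω ^ (k + 1) * ∑ i : Fin T, (if 0 ≤ (i : ℕ) ∧ (i : ℕ) + (k + 1) ≤ (j : ℕ) then
            (((j : ℕ) - (i : ℕ) - 1).choose k : ℝ) else 0) := by rw [← Finset.mul_sum]
        _ ≤ Ω ^ (k + 1) * ((T : ℝ) ^ (k + 1) / (Nat.factorial (k + 1))) := by
            apply mul_le_mul_of_nonneg_left _ (by positivity)
            have hnat := natsum_bound T 0 (j : ℕ) k j.isLt
            have hsum : ∑ i : Fin T, (if 0 ≤ (i : ℕ) ∧ (i : ℕ) + (k + 1) ≤ (j : ℕ) then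
                (((j : ℕ) - (i : ℕ) - 1).choose k : ℝ) else 0)
                = ∑ m ∈ Finset.range T, (if 0 ≤ m ∧ m + (k + 1) ≤ (j : ℕ) then
                (((j : ℕ) - m - 1).choose k : ℝ) else 0) :=
              Fin.sum_univ_eq_sum_range (fun m => if 0 ≤ m ∧ m + (k + 1) ≤ (j : ℕ)
                then (((j : ℕ) - m - 1).choose k : ℝ) else 0) T
            rw [hsum]
            calc ∑ m ∈ Finset.range T, (if 0 ≤ m ∧ m + (k + 1) ≤ (j : ℕ) then
                (((j : ℕ) - m - 1).choose k : ℝ) else 0)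
                = ((∑ m ∈ Finset.range T, if 0 ≤ m ∧ m + (k + 1) ≤ (j : ℕ)
                  then ((j : ℕ) - m - 1).choose k else 0 : ℕ) : ℝ) := by
                  push_cast [apply_ite (Nat.cast : ℕ → ℝ)]
                  rfl
              _ ≤ (((j : ℕ) - 0).choose (k + 1) : ℝ) := by exact_mod_cast hnat
              _ ≤ ((T.choose (k + 1) : ℕ) : ℝ) := by
                  exact_mod_cast Nat.choose_le_choose (k + 1) (by omega : (j : ℕ) - 0 ≤ T)
              _ ≤ (T : ℝ) ^ (k + 1) / (Nat.factorial (k + 1)) := by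
                  have := Nat.choose_le_pow_div (α := ℝ) (k + 1) T
                  simpa using this
        _ = B := hB.symm
    -- Frobenius bound
    have hfrob : ∑ i, ∑ j, ((N ^ (k + 1)) i j) ^ 2 ≤ (T : ℝ) * B ^ 2 := by
      rw [Finset.sum_comm]
      calc ∑ j, ∑ i, ((N ^ (k + 1)) i j) ^ 2
          ≤ ∑ j : Fin T, (∑ i, (N ^ (k + 1)) i j) ^ 2 := by
            apply Finset.sum_le_sum
            intro j _
            exact Finset.sum_sq_le_sq_sum_of_nonneg fun i _ => (key k i j).1
        _ ≤ ∑ _j : Fin T, B ^ 2 := by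
            apply Finset.sum_le_sum
            intro j _
            have h0 : 0 ≤ ∑ i, (N ^ (k + 1)) i j :=
              Finset.sum_nonneg fun i _ => (key k i j).1
            exact pow_le_pow_left₀ h0 (colsum j) 2
        _ = (T : ℝ) * B ^ 2 := by
            rw [Finset.sum_const, Finset.card_univ, Fintype.card_fin, nsmul_eq_mul]
    calc opNorm (N ^ (k + 1)) ≤ Real.sqrt (∑ i, ∑ j, ((N ^ (k + 1)) i j) ^ 2) :=
          opNorm_le_frob _
      _ ≤ Real.sqrt ((T : ℝ) * B ^ 2) := Real.sqrt_le_sqrt hfrob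
      _ = Real.sqrt T * B := by
          rw [Real.sqrt_mul (by positivity), Real.sqrt_sq hBnn]
      _ = Real.sqrt T * Ω ^ (k + 1) * (T : ℝ) ^ (k + 1) / (Nat.factorial (k + 1)) := by
          rw [hB]; ring
end
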